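/- Let G be a 2-edge-connected finite simple graph, H a circuit in G, and e = uv an edge of G not in E(H) such that e is not a bridge of G − E(H). Let D be the maximal 2-edge-connected subgraph of G − E(H) containing e. If D and H share a vertex, then there is a circuit of G whose edge set contains E(H) ∪ {e}. -/

import Mathlib

open SimpleGraph

/-- A subgraph (given as a simple graph on the same vertex set) is 2-edge-connected:
its support is connected within it, it has an edge, and it has no bridge. -/
def Is2ECSubgraph {V : Type*} (D : SimpleGraph V) : Prop :=
  (∀ u ∈ D.support, ∀ v ∈ D.support, D.Reachable u v) ∧ ∀ f, ¬ D.IsBridge f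

open SimpleGraph.Walk in
/-- A prefix of a walk ending at the first vertex in `S`. -/
private lemma prefix_until {V : Type*} {D : SimpleGraph V} {w x : V} (P : D.Walk w x)
    (S : Set V) (hx : x ∈ S) :
    ∃ z, z ∈ S ∧ ∃ P₁ : D.Walk w z,
      (∀ a ∈ P₁.support, a ∈ S → a = z) ∧ P₁.edges ⊆ P.edges := by
  classical
  induction P with
  | nil => exact ⟨_, hx, Walk.nil, by simp, by simp⟩
  | @cons w y x h Q ih =>
    by_cases hw : w ∈ S
    · exact ⟨w, hw, Walk.nil, by simp, by simp⟩
    · obtain ⟨z, hz, Q₁, hprop, hsub⟩ := ih hx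
      refine ⟨z, hz, Walk.cons h Q₁, ?_, ?_⟩
      · intro a ha haS
        rw [Walk.support_cons, List.mem_cons] at ha
        rcases ha with rfl | ha
        · exact absurd haS hw
        · exact hprop a ha haS
      · intro g hg
        rw [Walk.edges_cons, List.mem_cons] at hg
        rcases hg with rfl | hg
        · simp [Walk.edges_cons]
        · exact List.mem_cons_of_mem _ (hsub hg)

open SimpleGraph.Walk in
/-- In a bridgeless graph, any vertex connected to an endpoint of an edge lies on a
closed trail through that edge. -/
private lemma closed_trail_thru_edge {V : Type*} {D : SimpleGraph V}
    (hnb : ∀ f, ¬ D.IsBridge f) {u v : V} (huv : D.Adj u v) {a b : V} (Q : D.Walk a b)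
    (hbu : b = u) : ∃ T : D.Walk a a, T.IsCircuit ∧ s(u, v) ∈ T.edges := by
  classical
  induction Q with
  | @nil c =>
    subst hbu
    have hreach : (D \ fromEdgeSet {s(c, v)}).Reachable c v := by
      have hb := hnb s(c, v)
      rw [isBridge_iff] at hb
      by_contra hr
      exact hb hr
    rw [show D \ fromEdgeSet {s(c, v)} = D.deleteEdges {s(c, v)} from rfl,
      reachable_deleteEdges_iff_exists_walk] at hreach
    obtain ⟨p, hp⟩ := hreach
    have hpe : s(c, v) ∉ (p.toPath : D.Walk c v).edges :=
      fun hc => hp (Walk.edges_toPath_subset p hc)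
    refine ⟨Walk.cons huv (p.toPath : D.Walk c v).reverse, ?_, by simp⟩
    constructor
    · rw [Walk.isTrail_cons]
      refine ⟨Walk.IsTrail.reverse _ (Walk.IsPath.isTrail p.toPath.property), ?_⟩
      rw [Walk.edges_reverse, List.mem_reverse]
      exact hpe
    · intro hc; exact absurd (congrArg Walk.length hc) (by simp)
  | @cons w y b h Q ih =>
    obtain ⟨T, hT, he⟩ := ih hbu
    by_cases hw : w ∈ T.support
    · exact ⟨T.rotate w hw, hT.rotate hw, by rwa [(T.rotate_edges w hw).mem_iff]⟩
    · -- w not on T; edge f = s(w, y) is not in T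
      have hfT : s(w, y) ∉ T.edges := fun hf => hw (T.fst_mem_support_of_mem_edges hf)
      have hreach : (D \ fromEdgeSet {s(w, y)}).Reachable w y := by
        have hb2 := hnb s(w, y)
        rw [isBridge_iff] at hb2
        by_contra hr
        exact hb2 hr
      rw [show D \ fromEdgeSet {s(w, y)} = D.deleteEdges {s(w, y)} from rfl,
        reachable_deleteEdges_iff_exists_walk] at hreach
      obtain ⟨p, hp⟩ := hreach
      obtain ⟨z, hz, P₁, hprop, hsub⟩ :=
        prefix_until p {a | a ∈ T.support} (by simp [T.start_mem_support])
      set P₂ : D.Walk w z := (P₁.toPath : D.Walk w z) with hP₂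
      have hprop₂ : ∀ a ∈ P₂.support, a ∈ T.support → a = z := fun a ha haS =>
        hprop a (Walk.support_toPath_subset P₁ ha) haS
      have hsub₂ : P₂.edges ⊆ p.edges := fun g hg =>
        hsub (Walk.edges_toPath_subset P₁ hg)
      have hfP : s(w, y) ∉ P₂.edges := fun hc => hp (hsub₂ hc)
      have hdisj : ∀ g ∈ P₂.edges, g ∉ T.edges := by
        intro g hg hgt
        induction g with
        | _ a b =>
          have ha : a = z := hprop₂ a (P₂.fst_mem_support_of_mem_edges hg)
            (T.fst_mem_support_of_mem_edges hgt)
          have hb : b = z := hprop₂ b (P₂.snd_mem_support_of_mem_edges hg)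
            (T.snd_mem_support_of_mem_edges hgt)
          have hadj : D.Adj a b := T.adj_of_mem_edges hgt
          rw [ha, hb] at hadj
          exact D.irrefl hadj
      have hzT : z ∈ T.support := hz
      have hspec := T.take_spec hzT
      have hesplit : s(u, v) ∈ (T.takeUntil z hzT).edges ∨
          s(u, v) ∈ (T.dropUntil z hzT).edges := by
        rw [← List.mem_append, ← Walk.edges_append, hspec]
        exact he
      have hAt : (T.takeUntil z hzT).IsTrail := hT.isTrail.takeUntil hzT
      have hBt : (T.dropUntil z hzT).IsTrail := hT.isTrail.dropUntil hzT
      have hAsub : (T.takeUntil z hzT).edges ⊆ T.edges := by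
        intro g hg; rw [← hspec, Walk.edges_append]; exact List.mem_append_left _ hg
      have hBsub : (T.dropUntil z hzT).edges ⊆ T.edges := by
        intro g hg; rw [← hspec, Walk.edges_append]; exact List.mem_append_right _ hg
      have hP₂t : P₂.IsTrail := Walk.IsPath.isTrail P₁.toPath.property
      rcases hesplit with heA | heB
      · refine ⟨Walk.cons h ((T.takeUntil z hzT).append P₂.reverse), ?_, ?_⟩
        · constructor
          · rw [Walk.isTrail_cons]
            constructor
            · rw [Walk.isTrail_def, Walk.edges_append, List.nodup_append]
              refine ⟨hAt.edges_nodup, (Walk.IsTrail.reverse _ hP₂t).edges_nodup, ?_⟩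
              intro g hg g' hg' hgg; subst hgg
              rw [Walk.edges_reverse, List.mem_reverse] at hg'
              exact hdisj g hg' (hAsub hg)
            · rw [Walk.edges_append, List.mem_append]
              rintro (hc | hc)
              · exact hfT (hAsub hc)
              · rw [Walk.edges_reverse, List.mem_reverse] at hc
                exact hfP hc
          · intro hc; exact absurd (congrArg Walk.length hc) (by simp)
        · rw [Walk.edges_cons, Walk.edges_append]
          exact List.mem_cons_of_mem _ (List.mem_append_left _ heA)
      · refine ⟨P₂.append ((T.dropUntil z hzT).append (Walk.cons h.symm Walk.nil)), ?_, ?_⟩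
        · have hedges : (P₂.append ((T.dropUntil z hzT).append
              (Walk.cons h.symm Walk.nil))).edges
              = P₂.edges ++ ((T.dropUntil z hzT).edges ++ [s(y, w)]) := by
            rw [Walk.edges_append, Walk.edges_append]; rfl
          constructor
          · rw [Walk.isTrail_def, hedges, List.nodup_append]
            refine ⟨hP₂t.edges_nodup, ?_, ?_⟩
            · rw [List.nodup_append]
              refine ⟨hBt.edges_nodup, List.nodup_singleton _, ?_⟩
              intro g hg g' hg' hgg; subst hgg
              rw [List.mem_singleton] at hg'
              subst hg'
              exact hfT (hBsub (by rwa [Sym2.eq_swap] at hg))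
            · intro g hg g' hg' hgg; subst hgg
              rw [List.mem_append, List.mem_singleton] at hg'
              rcases hg' with hg' | rfl
              · exact hdisj g hg (hBsub hg')
              · exact hfP (by rwa [Sym2.eq_swap] at hg)
          · intro hc
            have hmem : s(u, v) ∈ (P₂.append ((T.dropUntil z hzT).append
                (Walk.cons h.symm Walk.nil))).edges := by
              rw [hedges]
              exact List.mem_append_right _ (List.mem_append_left _ heB)
            rw [hc] at hmem
            simp at hmem
        · rw [Walk.edges_append, Walk.edges_append]
          exact List.mem_append_right _ (List.mem_append_left _ heB)

/-- If `G` is 2-edge-connected, `H` is a circuit of `G`, `e = uv ∉ E(H)` is not a bridge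
of `G - E(H)`, `D` is the maximal 2-edge-connected subgraph of `G - E(H)` containing `e`,
and `D` and `H` share a vertex, then `G` has a circuit through `E(H) ∪ {e}`. -/
theorem stmt5 {V : Type*} [Fintype V] (G : SimpleGraph V)
    (hGconn : G.Connected) (hGnb : ∀ f, ¬ G.IsBridge f)
    (x : V) (H : G.Walk x x) (hH : H.IsCircuit)
    (u v : V) (huv : G.Adj u v) (heH : s(u, v) ∉ H.edges)
    (hnb : ¬ (G.deleteEdges {f | f ∈ H.edges}).IsBridge s(u, v))
    (D : SimpleGraph V) (hDle : D ≤ G.deleteEdges {f | f ∈ H.edges})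
    (heD : s(u, v) ∈ D.edgeSet) (hD2 : Is2ECSubgraph D)
    (hmax : ∀ D' : SimpleGraph V, D ≤ D' → D' ≤ G.deleteEdges {f | f ∈ H.edges} →
      Is2ECSubgraph D' → s(u, v) ∈ D'.edgeSet → D' = D)
    (hshare : ∃ w, w ∈ D.support ∧ w ∈ H.support) :
    ∃ (y : V) (c : G.Walk y y), c.IsCircuit ∧ (∀ f ∈ H.edges, f ∈ c.edges) ∧
      s(u, v) ∈ c.edges := by
  classical
  obtain ⟨w, hwD, hwH⟩ := hshare
  have hDadj : D.Adj u v := heD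
  have huD : u ∈ D.support := ⟨v, hDadj⟩
  obtain ⟨Q⟩ := hD2.1 w hwD u huD
  obtain ⟨T, hT, heT⟩ := closed_trail_thru_edge hD2.2 hDadj Q rfl
  -- transfer T to G
  have hTsub : ∀ g ∈ T.edges, g ∈ G.edgeSet := by
    intro g hg
    have : g ∈ D.edgeSet := T.edges_subset_edgeSet hg
    exact SimpleGraph.edgeSet_mono (hDle.trans (G.deleteEdges_le _)) this
  set TG : G.Walk w w := T.transfer G hTsub with hTG
  have hTGedges : TG.edges = T.edges := T.edges_transfer hTsub
  -- edges of T avoid H's edges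
  have hTH : ∀ g ∈ T.edges, g ∉ H.edges := by
    intro g hg hgH
    have : g ∈ (G.deleteEdges {f | f ∈ H.edges}).edgeSet :=
      (SimpleGraph.edgeSet_mono hDle) (T.edges_subset_edgeSet hg)
    rw [edgeSet_deleteEdges] at this
    exact this.2 hgH
  -- rotate H to w
  set HR : G.Walk w w := H.rotate w hwH with hHR
  have hHRc : HR.IsCircuit := hH.rotate hwH
  have hHRedges : ∀ g, g ∈ HR.edges ↔ g ∈ H.edges := fun g => (H.rotate_edges w hwH).mem_iff
  refine ⟨w, TG.append HR, ?_, ?_, ?_⟩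
  · constructor
    · rw [Walk.isTrail_def, Walk.edges_append, List.nodup_append]
      refine ⟨?_, hHRc.isTrail.edges_nodup, ?_⟩
      · rw [hTGedges]
        exact hT.isTrail.edges_nodup
      · intro g hg g' hg' hgg; subst hgg
        rw [hTGedges] at hg
        exact hTH g hg ((hHRedges g).1 hg')
    · intro hc
      have : s(u, v) ∈ (TG.append HR).edges := by
        rw [Walk.edges_append, hTGedges]
        exact List.mem_append_left _ heT
      rw [hc] at this
      simp at this
  · intro f hf
    rw [Walk.edges_append, List.mem_append]
    exact Or.inr ((hHRedges f).2 hf)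
  · rw [Walk.edges_append, hTGedges]
    exact List.mem_append_left _ heT
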